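/- If (P₁,…,Pₙ) is a convex n-partition of ℝ^d, then the sets Q̂ᵢ = {(1/√(1+‖x‖²))·(1,x) : x ∈ Pᵢ} for i = 1,…,n together with Q̂_∞ = S^d₋ (the open lower hemisphere) form a convex partition of S^d into n+1 regions: each is a non-empty open spherically convex subset of S^d, they are pairwise disjoint, and the union of their closures is S^d. -/

import Mathlib

open scoped RealInnerProductSpace

/-- The vector `(1, x) ∈ ℝ^(d+1)` obtained from `x ∈ ℝ^d` by prepending a coordinate `1`. -/
noncomputable def liftVec {d : ℕ} (x : EuclideanSpace ℝ (Fin d)) :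
    EuclideanSpace ℝ (Fin (d + 1)) :=
  (EuclideanSpace.equiv (Fin (d + 1)) ℝ).symm (Fin.cons 1 (fun i => x i))

/-- The spherical representation map `x ↦ (1/√(1+‖x‖²)) • (1, x)`. -/
noncomputable def sphMap {d : ℕ} (x : EuclideanSpace ℝ (Fin d)) :
    EuclideanSpace ℝ (Fin (d + 1)) :=
  (Real.sqrt (1 + ‖x‖ ^ 2))⁻¹ • liftVec x

/-- A subset `Q` of the unit sphere is spherically convex if the cone over it is convex. -/
def SphConvex {m : ℕ} (Q : Set (EuclideanSpace ℝ (Fin m))) : Prop :=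
  Convex ℝ {y | ∃ q ∈ Q, ∃ l : ℝ, 0 ≤ l ∧ y = l • q}

/-! ### Auxiliary lemmas -/

lemma liftVec_zero {d : ℕ} (x : EuclideanSpace ℝ (Fin d)) : liftVec x 0 = 1 := rfl
lemma liftVec_succ {d : ℕ} (x : EuclideanSpace ℝ (Fin d)) (i : Fin d) : liftVec x i.succ = x i := rfl

lemma norm_liftVec_sq {d : ℕ} (x : EuclideanSpace ℝ (Fin d)) : ‖liftVec x‖ ^ 2 = 1 + ‖x‖ ^ 2 := by
  have h1 : ‖liftVec x‖ ^ 2 = ∑ i, ‖liftVec x i‖ ^ 2 := by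
    rw [EuclideanSpace.norm_eq, Real.sq_sqrt (by positivity)]
  have h2 : ‖x‖ ^ 2 = ∑ i, ‖x i‖ ^ 2 := by
    rw [EuclideanSpace.norm_eq, Real.sq_sqrt (by positivity)]
  rw [h1, h2, Fin.sum_univ_succ]
  simp [liftVec_zero, liftVec_succ]

lemma sqrt_pos' {d : ℕ} (x : EuclideanSpace ℝ (Fin d)) : 0 < Real.sqrt (1 + ‖x‖ ^ 2) :=
  Real.sqrt_pos.2 (by positivity)

lemma norm_liftVec {d : ℕ} (x : EuclideanSpace ℝ (Fin d)) :
    ‖liftVec x‖ = Real.sqrt (1 + ‖x‖ ^ 2) := by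
  rw [← norm_liftVec_sq, Real.sqrt_sq (norm_nonneg _)]

lemma norm_sphMap {d : ℕ} (x : EuclideanSpace ℝ (Fin d)) : ‖sphMap x‖ = 1 := by
  rw [sphMap, norm_smul, norm_liftVec, Real.norm_eq_abs,
    abs_of_pos (inv_pos.2 (sqrt_pos' x)), inv_mul_cancel₀ (sqrt_pos' x).ne']

lemma sphMap_zero {d : ℕ} (x : EuclideanSpace ℝ (Fin d)) :
    sphMap x 0 = (Real.sqrt (1 + ‖x‖ ^ 2))⁻¹ := by
  simp [sphMap, liftVec_zero]

lemma sphMap_zero_pos {d : ℕ} (x : EuclideanSpace ℝ (Fin d)) : 0 < sphMap x 0 := by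
  rw [sphMap_zero]; exact inv_pos.2 (sqrt_pos' x)

lemma sphMap_succ {d : ℕ} (x : EuclideanSpace ℝ (Fin d)) (i : Fin d) :
    sphMap x i.succ = (Real.sqrt (1 + ‖x‖ ^ 2))⁻¹ * x i := by
  simp [sphMap, liftVec_succ]

/-- The inverse map, projecting a vector with positive first coordinate back to `ℝ^d`. -/
noncomputable def gmap {d : ℕ} (v : EuclideanSpace ℝ (Fin (d + 1))) :
    EuclideanSpace ℝ (Fin d) :=
  (EuclideanSpace.equiv (Fin d) ℝ).symm (fun i => v i.succ / v 0)

lemma gmap_apply {d : ℕ} (v : EuclideanSpace ℝ (Fin (d + 1))) (i : Fin d) :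
    gmap v i = v i.succ / v 0 := rfl

lemma gmap_sphMap {d : ℕ} (x : EuclideanSpace ℝ (Fin d)) : gmap (sphMap x) = x := by
  ext i
  rw [gmap_apply, sphMap_succ, sphMap_zero, div_eq_iff (inv_pos.2 (sqrt_pos' x)).ne', mul_comm]

lemma liftVec_gmap {d : ℕ} (v : EuclideanSpace ℝ (Fin (d + 1))) (h0 : v 0 ≠ 0) :
    liftVec (gmap v) = (v 0)⁻¹ • v := by
  ext j
  induction j using Fin.cases with
  | zero => simp [liftVec_zero, PiLp.smul_apply, smul_eq_mul, inv_mul_cancel₀ h0]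
  | succ i => simp [liftVec_succ, gmap_apply, PiLp.smul_apply, smul_eq_mul, div_eq_inv_mul]

lemma sphMap_gmap {d : ℕ} (v : EuclideanSpace ℝ (Fin (d + 1))) (h1 : ‖v‖ = 1)
    (h0 : 0 < v 0) : sphMap (gmap v) = v := by
  have hlv : liftVec (gmap v) = (v 0)⁻¹ • v := liftVec_gmap v h0.ne'
  have hn : Real.sqrt (1 + ‖gmap v‖ ^ 2) = (v 0)⁻¹ := by
    rw [← norm_liftVec, hlv, norm_smul, Real.norm_eq_abs, abs_of_pos (inv_pos.2 h0), h1, mul_one]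
  rw [sphMap, hn, hlv, inv_inv, smul_smul, mul_inv_cancel₀ h0.ne', one_smul]

lemma cont_apply {m : ℕ} (i : Fin m) :
    Continuous (fun v : EuclideanSpace ℝ (Fin m) => v i) :=
  (continuous_apply i).comp (EuclideanSpace.equiv (Fin m) ℝ).continuous

lemma cont_liftVec {d : ℕ} : Continuous (fun x : EuclideanSpace ℝ (Fin d) => liftVec x) := by
  apply (EuclideanSpace.equiv (Fin (d+1)) ℝ).symm.continuous.comp
  apply continuous_pi
  intro j
  induction j using Fin.cases with
  | zero => simpa using continuous_const
  | succ i => simpa using cont_apply i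

lemma cont_sphMap {d : ℕ} : Continuous (fun x : EuclideanSpace ℝ (Fin d) => sphMap x) := by
  apply Continuous.fun_smul _ cont_liftVec
  exact ((Real.continuous_sqrt.comp (by continuity)).inv₀
    (fun x => (Real.sqrt_pos.2 (by positivity)).ne'))

lemma contOn_gmap {d : ℕ} :
    ContinuousOn (fun v : EuclideanSpace ℝ (Fin (d + 1)) => gmap v) {v | 0 < v 0} := by
  apply (EuclideanSpace.equiv (Fin d) ℝ).symm.continuous.comp_continuousOn
  apply continuousOn_pi.2
  intro i
  exact ((cont_apply i.succ).continuousOn).div ((cont_apply 0).continuousOn)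
    (fun v hv => ne_of_gt hv)

lemma liftVec_combo {d : ℕ} (x y : EuclideanSpace ℝ (Fin d)) {a b : ℝ} (hab : a + b = 1) :
    liftVec (a • x + b • y) = a • liftVec x + b • liftVec y := by
  ext j
  induction j using Fin.cases with
  | zero => simp [liftVec_zero, PiLp.add_apply, PiLp.smul_apply, smul_eq_mul, hab]
  | succ i => simp [liftVec_succ, PiLp.add_apply, PiLp.smul_apply, smul_eq_mul]

lemma cone_image_eq {d : ℕ} (S : Set (EuclideanSpace ℝ (Fin d))) :
    {y | ∃ q ∈ sphMap '' S, ∃ l : ℝ, 0 ≤ l ∧ y = l • q}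
      = {y | ∃ x ∈ S, ∃ μ : ℝ, 0 ≤ μ ∧ y = μ • liftVec x} := by
  ext y
  constructor
  · rintro ⟨q, ⟨x, hx, rfl⟩, l, hl, rfl⟩
    exact ⟨x, hx, l * (Real.sqrt (1 + ‖x‖ ^ 2))⁻¹,
      mul_nonneg hl (inv_pos.2 (sqrt_pos' x)).le, by rw [sphMap, smul_smul]⟩
  · rintro ⟨x, hx, μ, hμ, rfl⟩
    refine ⟨sphMap x, ⟨x, hx, rfl⟩, μ * Real.sqrt (1 + ‖x‖ ^ 2),
      mul_nonneg hμ (sqrt_pos' x).le, ?_⟩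
    rw [sphMap, smul_smul, mul_assoc, mul_inv_cancel₀ (sqrt_pos' x).ne', mul_one]

lemma sphConvex_image {d : ℕ} {S : Set (EuclideanSpace ℝ (Fin d))} (hS : Convex ℝ S) :
    SphConvex (sphMap '' S) := by
  rw [SphConvex, cone_image_eq]
  rintro y ⟨x, hx, μ, hμ, rfl⟩ z ⟨w, hw, ν, hν, rfl⟩ a b ha hb hab
  rcases eq_or_lt_of_le (by positivity : (0:ℝ) ≤ a * μ + b * ν) with h | h
  · have h1 : a * μ = 0 := by nlinarith [mul_nonneg ha hμ, mul_nonneg hb hν]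
    have h2 : b * ν = 0 := by nlinarith [mul_nonneg ha hμ, mul_nonneg hb hν]
    refine ⟨x, hx, 0, le_refl 0, ?_⟩
    simp [smul_smul, h1, h2]
  · set s := a * μ + b * ν with hs
    refine ⟨(a * μ / s) • x + (b * ν / s) • w,
      hS hx hw (by positivity) (by positivity) (by field_simp; linarith), s, h.le, ?_⟩
    rw [liftVec_combo _ _ (by field_simp; linarith), smul_add, smul_smul, smul_smul, smul_smul, smul_smul]
    congr 2 <;> field_simp

lemma sphConvex_lower {m : ℕ} :
    SphConvex {v : EuclideanSpace ℝ (Fin (m + 1)) | ‖v‖ = 1 ∧ v 0 < 0} := by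
  have hkey : {y : EuclideanSpace ℝ (Fin (m + 1)) |
      ∃ q ∈ {v : EuclideanSpace ℝ (Fin (m + 1)) | ‖v‖ = 1 ∧ v 0 < 0},
        ∃ l : ℝ, 0 ≤ l ∧ y = l • q} = insert 0 {v | v 0 < 0} := by
    ext y
    constructor
    · rintro ⟨q, ⟨hq1, hq0⟩, l, hl, rfl⟩
      rcases eq_or_lt_of_le hl with h | h
      · left; simp [← h]
      · right
        simpa [PiLp.smul_apply, smul_eq_mul] using mul_neg_of_pos_of_neg h hq0
    · rintro (rfl | hy)
      · refine ⟨(EuclideanSpace.single 0 (-1 : ℝ)), ⟨?_, ?_⟩, 0, le_refl 0, by simp⟩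
        · simp [EuclideanSpace.norm_single]
        · simp [EuclideanSpace.single_apply]
      · have hy0 : y ≠ 0 := by
          intro h; rw [h] at hy; simp at hy
        refine ⟨‖y‖⁻¹ • y, ⟨?_, ?_⟩, ‖y‖, norm_nonneg y, ?_⟩
        · rw [norm_smul, Real.norm_eq_abs, abs_of_pos (inv_pos.2 (norm_pos_iff.2 hy0)),
            inv_mul_cancel₀ (norm_ne_zero_iff.2 hy0)]
        · simpa [PiLp.smul_apply, smul_eq_mul] using
            mul_neg_of_pos_of_neg (inv_pos.2 (norm_pos_iff.2 hy0)) hy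
        · rw [smul_smul, mul_inv_cancel₀ (norm_ne_zero_iff.2 hy0), one_smul]
  rw [SphConvex, hkey]
  rintro y (rfl | hy) z (rfl | hz) a b ha hb hab
  · simp
  · rcases eq_or_lt_of_le hb with h | h
    · left; simp [← h]
    · right
      simpa [PiLp.smul_apply, PiLp.add_apply, smul_eq_mul] using mul_neg_of_pos_of_neg h hz
  · rcases eq_or_lt_of_le ha with h | h
    · left; simp [← h]
    · right
      simpa [PiLp.smul_apply, PiLp.add_apply, smul_eq_mul] using mul_neg_of_pos_of_neg h hy
  · right
    have : a * y 0 + b * z 0 < 0 := by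
      rcases eq_or_lt_of_le ha with h | h
      · have hb1 : b = 1 := by linarith
        rw [← h, hb1]; simpa using hz
      · linarith [mul_neg_of_pos_of_neg h hy, mul_nonpos_of_nonneg_of_nonpos hb hz.le]
    simpa [PiLp.smul_apply, PiLp.add_apply, smul_eq_mul] using this

lemma image_sphMap_eq {d : ℕ} (S : Set (EuclideanSpace ℝ (Fin d))) :
    sphMap '' S = {v | 0 < v 0 ∧ gmap v ∈ S} ∩ Metric.sphere 0 1 := by
  ext v
  constructor
  · rintro ⟨x, hx, rfl⟩
    refine ⟨⟨sphMap_zero_pos x, ?_⟩, by rw [mem_sphere_zero_iff_norm]; exact norm_sphMap x⟩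
    rw [gmap_sphMap]; exact hx
  · rintro ⟨⟨h0, hg⟩, hs⟩
    exact ⟨gmap v, hg, sphMap_gmap v (mem_sphere_zero_iff_norm.1 hs) h0⟩

lemma isOpen_upper_preimage {d : ℕ} {S : Set (EuclideanSpace ℝ (Fin d))} (hS : IsOpen S) :
    IsOpen {v : EuclideanSpace ℝ (Fin (d + 1)) | 0 < v 0 ∧ gmap v ∈ S} := by
  have : {v : EuclideanSpace ℝ (Fin (d + 1)) | 0 < v 0 ∧ gmap v ∈ S}
      = {v | 0 < v 0} ∩ gmap ⁻¹' S := rfl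
  rw [this]
  exact contOn_gmap.isOpen_inter_preimage
    (isOpen_lt continuous_const (cont_apply 0)) hS

lemma equator_mem_closure {m : ℕ} (v : EuclideanSpace ℝ (Fin (m + 1)))
    (h1 : ‖v‖ = 1) (h0 : v 0 = 0) :
    v ∈ closure {w : EuclideanSpace ℝ (Fin (m + 1)) | ‖w‖ = 1 ∧ w 0 < 0} := by
  set e0 : EuclideanSpace ℝ (Fin (m + 1)) := EuclideanSpace.single 0 (1 : ℝ) with he0
  set f : ℝ → EuclideanSpace ℝ (Fin (m + 1)) :=
    fun ε => (Real.sqrt (1 + ε ^ 2))⁻¹ • (v - ε • e0) with hf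
  have hnorm : ∀ ε : ℝ, ‖v - ε • e0‖ = Real.sqrt (1 + ε ^ 2) := by
    intro ε
    have hinner : ⟪v, ε • e0⟫ = 0 := by
      rw [real_inner_smul_right, he0, EuclideanSpace.inner_single_right]
      simp [h0]
    have hsq : ‖v - ε • e0‖ ^ 2 = 1 + ε ^ 2 := by
      rw [norm_sub_sq_real, hinner, h1, norm_smul, he0, EuclideanSpace.norm_single]
      simp [mul_pow]
    rw [← hsq, Real.sqrt_sq (norm_nonneg _)]
  have hsqrtpos : ∀ ε : ℝ, (0:ℝ) < Real.sqrt (1 + ε ^ 2) :=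
    fun ε => Real.sqrt_pos.2 (by positivity)
  have hmem : ∀ ε ∈ Set.Ioi (0:ℝ),
      f ε ∈ {w : EuclideanSpace ℝ (Fin (m + 1)) | ‖w‖ = 1 ∧ w 0 < 0} := by
    intro ε hε
    constructor
    · rw [hf]
      simp only [norm_smul, Real.norm_eq_abs, abs_of_pos (inv_pos.2 (hsqrtpos ε)), hnorm ε,
        inv_mul_cancel₀ (hsqrtpos ε).ne']
    · have : f ε 0 = (Real.sqrt (1 + ε ^ 2))⁻¹ * (-ε) := by
        rw [hf]
        simp [PiLp.smul_apply, PiLp.sub_apply, smul_eq_mul, h0, he0, EuclideanSpace.single_apply]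
      rw [this]
      exact mul_neg_of_pos_of_neg (inv_pos.2 (hsqrtpos ε)) (neg_neg_iff_pos.2 hε)
  have hcont : Continuous f := by
    apply Continuous.fun_smul
    · exact (Real.continuous_sqrt.comp (by continuity)).inv₀ (fun ε => (hsqrtpos ε).ne')
    · exact continuous_const.sub (continuous_id.smul continuous_const)
  have hf0 : f 0 = v := by
    rw [hf]; simp
  have htend : Filter.Tendsto f (nhdsWithin 0 (Set.Ioi 0)) (nhds v) := by
    rw [← hf0]
    exact (hcont.tendsto 0).mono_left nhdsWithin_le_nhds
  exact mem_closure_of_tendsto htend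
    (eventually_mem_nhdsWithin.mono (fun ε hε => hmem ε hε))

/-- **The spherical representation of a convex n-partition is a convex partition of `S^d`
into `n+1` regions.**  Given a convex `n`-partition `(P₁,…,Pₙ)` of `ℝ^d`, the images
`Q̂ᵢ = sphMap '' Pᵢ` together with the open lower hemisphere `Q̂_∞` are non-empty, open in
the sphere, spherically convex, pairwise disjoint, and the union of their closures is `S^d`. -/
theorem spherical_representation_is_partition
    (d n : ℕ) (P : Fin n → Set (EuclideanSpace ℝ (Fin d)))
    (hne : ∀ i, (P i).Nonempty)
    (hopen : ∀ i, IsOpen (P i))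
    (hconv : ∀ i, Convex ℝ (P i))
    (hdisj : Pairwise (Function.onFun Disjoint P))
    (hcover : (⋃ i, closure (P i)) = Set.univ) :
    ∀ Q : Option (Fin n) → Set (EuclideanSpace ℝ (Fin (d + 1))),
      (Q = fun o => o.elim {v | ‖v‖ = 1 ∧ v 0 < 0} (fun i => sphMap '' P i)) →
      (∀ o, (Q o).Nonempty) ∧
      (∀ o, SphConvex (Q o)) ∧
      (∀ o, ∃ U, IsOpen U ∧ Q o = U ∩ Metric.sphere 0 1) ∧
      Pairwise (Function.onFun Disjoint Q) ∧
      (⋃ o, closure (Q o)) = Metric.sphere 0 1 := by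
  intro Q hQ
  subst hQ
  have hQnone : (fun o : Option (Fin n) =>
      o.elim {v : EuclideanSpace ℝ (Fin (d+1)) | ‖v‖ = 1 ∧ v 0 < 0}
        (fun i => sphMap '' P i)) none = {v | ‖v‖ = 1 ∧ v 0 < 0} := rfl
  have hQsome : ∀ i, (fun o : Option (Fin n) =>
      o.elim {v : EuclideanSpace ℝ (Fin (d+1)) | ‖v‖ = 1 ∧ v 0 < 0}
        (fun i => sphMap '' P i)) (some i) = sphMap '' P i := fun i => rfl
  refine ⟨?_, ?_, ?_, ?_, ?_⟩
  · -- nonempty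
    intro o
    cases o with
    | none =>
      refine ⟨EuclideanSpace.single 0 (-1 : ℝ), ?_, ?_⟩
      · simp [EuclideanSpace.norm_single]
      · simp [EuclideanSpace.single_apply]
    | some i => exact (hne i).image sphMap
  · -- spherically convex
    intro o
    cases o with
    | none => exact sphConvex_lower
    | some i => exact sphConvex_image (hconv i)
  · -- open in the sphere
    intro o
    cases o with
    | none =>
      refine ⟨{v | v 0 < 0}, isOpen_lt (cont_apply 0) continuous_const, ?_⟩
      ext v
      simp only [hQnone, Set.mem_setOf_eq, Set.mem_inter_iff, mem_sphere_zero_iff_norm]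
      tauto
    | some i =>
      exact ⟨{v | 0 < v 0 ∧ gmap v ∈ P i}, isOpen_upper_preimage (hopen i),
        image_sphMap_eq (P i)⟩
  · -- pairwise disjoint
    intro o o' hoo'
    have key : ∀ (i j : Fin n), i ≠ j →
        Disjoint (sphMap '' P i) (sphMap '' P j) := by
      intro i j hij
      rw [Set.disjoint_left]
      rintro v ⟨x, hx, rfl⟩ ⟨y, hy, hyv⟩
      have : y = x := by
        have := congrArg gmap hyv
        rwa [gmap_sphMap, gmap_sphMap] at this
      exact Set.disjoint_left.1 (hdisj hij) hx (this ▸ hy)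
    have keyns : ∀ i : Fin n,
        Disjoint {v : EuclideanSpace ℝ (Fin (d+1)) | ‖v‖ = 1 ∧ v 0 < 0} (sphMap '' P i) := by
      intro i
      rw [Set.disjoint_left]
      rintro v ⟨_, hv0⟩ ⟨x, _, rfl⟩
      exact absurd hv0 (not_lt.2 (sphMap_zero_pos x).le)
    cases o with
    | none =>
      cases o' with
      | none => exact absurd rfl hoo'
      | some j => exact keyns j
    | some i =>
      cases o' with
      | none => exact (keyns i).symm
      | some j =>
        exact key i j (fun h => hoo' (by rw [h]))
  · -- union of closures is the sphere
    apply Set.Subset.antisymm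
    · apply Set.iUnion_subset
      intro o
      apply closure_minimal _ Metric.isClosed_sphere
      cases o with
      | none =>
        rintro v ⟨h1, _⟩
        exact mem_sphere_zero_iff_norm.2 h1
      | some i =>
        rintro v ⟨x, _, rfl⟩
        exact mem_sphere_zero_iff_norm.2 (norm_sphMap x)
    · intro v hv
      have hv1 : ‖v‖ = 1 := mem_sphere_zero_iff_norm.1 hv
      rcases lt_trichotomy (v 0) 0 with h | h | h
      · exact Set.mem_iUnion.2 ⟨none, subset_closure ⟨hv1, h⟩⟩
      · exact Set.mem_iUnion.2 ⟨none, equator_mem_closure v hv1 h⟩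
      · have hx : gmap v ∈ ⋃ i, closure (P i) := by
          rw [hcover]; trivial
        rcases Set.mem_iUnion.1 hx with ⟨i, hi⟩
        refine Set.mem_iUnion.2 ⟨some i, ?_⟩
        have : v ∈ sphMap '' closure (P i) :=
          ⟨gmap v, hi, sphMap_gmap v hv1 h⟩
        exact image_closure_subset_closure_image (s := P i) cont_sphMap this
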